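/- Let J be a 2-torsion free Jordan ring with nontrivial idempotent e satisfying conditions (i)–(iii), and φ : J → J' a bijective n-multiplicative isomorphism onto a Jordan ring J'. Then φ is additive on J_{1/2}: φ(a + b) = φ(a) + φ(b) for all a, b ∈ J_{1/2}. -/

import Mathlib

/-- Peirce 1-component relative to `e`: elements `x` with `e*x = x`. -/
def peirce1 {J : Type*} [Mul J] (e : J) : Set J := {x | e * x = x}

/-- Peirce 1/2-component relative to `e`: elements `x` with `e*x = (1/2)x`, i.e. `e*x + e*x = x`. -/
def peirceHalf {J : Type*} [Mul J] [Add J] (e : J) : Set J := {x | e * x + e * x = x}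

/-- Peirce 0-component relative to `e`: elements `x` with `e*x = 0`. -/
def peirce0 {J : Type*} [Mul J] [Zero J] (e : J) : Set J := {x | e * x = 0}

/-- The right-normed nonassociative monomial `x₁(x₂(⋯(x_{n-1}x_n)⋯))` on a list of arguments. -/
def rnm {J : Type*} [Mul J] [Zero J] : List J → J
  | [] => 0
  | [x] => x
  | x :: y :: l => x * rnm (y :: l)

/-- `φ` is an `n`-multiplicative map (w.r.t. the right-normed monomial of degree `n`). -/
def IsNMulMap {J J' : Type*} [Mul J] [Zero J] [Mul J'] [Zero J'] (n : ℕ) (φ : J → J') : Prop :=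
  ∀ l : List J, l.length = n → φ (rnm l) = rnm (l.map φ)






section Part1
variable {J : Type*} [NonUnitalNonAssocCommRing J]
variable (hJordan : ∀ x y : J, ((x * x) * y) * x = (x * x) * (y * x))
variable (h2 : ∀ x : J, x + x = 0 → x = 0)
include hJordan h2

omit hJordan in
lemma tf2 {a b : J} (h : a + a = b + b) : a = b := by
  have := h2 (a - b) (by rw [sub_add_sub_comm, h, sub_self])
  exact sub_eq_zero.mp this

omit hJordan in
lemma eq_of_sub_eq {a b c d : J} (h : c = d) (k : a - b = c - d) : a = b := by
  exact sub_eq_zero.mp (by rw [k, h, sub_self])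

omit hJordan in
lemma eq_of_sub_eq2 {a b c d : J} (h : c = d) (k : a - b = (c - d) + (c - d)) : a = b := by
  exact sub_eq_zero.mp (by rw [k, h, sub_self, add_zero])

lemma L21 (u v y : J) :
    ((u*u)*y)*v + (((u*v)*y)*u + ((u*v)*y)*u)
      = (u*u)*(y*v) + ((u*v)*(y*u) + (u*v)*(y*u)) := by
  have h1 := hJordan (u+v) y
  have h2' := hJordan (u-v) y
  apply tf2 h2
  have key : (((u*u)*y)*v + (((u*v)*y)*u + ((u*v)*y)*u))
        + (((u*u)*y)*v + (((u*v)*y)*u + ((u*v)*y)*u))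
        - (((u*u)*(y*v) + ((u*v)*(y*u) + (u*v)*(y*u)))
        + ((u*u)*(y*v) + ((u*v)*(y*u) + (u*v)*(y*u))))
      = ((((u+v)*(u+v))*y)*(u+v) - ((u+v)*(u+v))*(y*(u+v)))
        - ((((u-v)*(u-v))*y)*(u-v) - ((u-v)*(u-v))*(y*(u-v)))
        - ((((v*v)*y)*v - (v*v)*(y*v)) + (((v*v)*y)*v - (v*v)*(y*v))) := by
    simp only [add_mul, mul_add, sub_mul, mul_sub, mul_comm v u]
    abel
  have : (((u*u)*y)*v + (((u*v)*y)*u + ((u*v)*y)*u))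
        + (((u*u)*y)*v + (((u*v)*y)*u + ((u*v)*y)*u))
        - (((u*u)*(y*v) + ((u*v)*(y*u) + (u*v)*(y*u)))
        + ((u*u)*(y*v) + ((u*v)*(y*u) + (u*v)*(y*u)))) = 0 := by
    rw [key, h1, h2', hJordan v y]
    abel
  exact sub_eq_zero.mp this

lemma OPID (u w v y : J) :
    ((u*w)*y)*v + ((u*v)*y)*w + ((w*v)*y)*u
      = (u*w)*(y*v) + (u*v)*(y*w) + (w*v)*(y*u) := by
  have l1 := L21 hJordan h2 (u+w) v y
  have l2 := L21 hJordan h2 u v y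
  have l3 := L21 hJordan h2 w v y
  apply tf2 h2
  have key : (((u*w)*y)*v + ((u*v)*y)*w + ((w*v)*y)*u)
      + (((u*w)*y)*v + ((u*v)*y)*w + ((w*v)*y)*u)
      - (((u*w)*(y*v) + (u*v)*(y*w) + (w*v)*(y*u))
      + ((u*w)*(y*v) + (u*v)*(y*w) + (w*v)*(y*u)))
      = (((((u+w)*(u+w))*y)*v + ((((u+w)*v)*y)*(u+w) + (((u+w)*v)*y)*(u+w)))
          - (((u+w)*(u+w))*(y*v) + (((u+w)*v)*(y*(u+w)) + ((u+w)*v)*(y*(u+w)))))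
        - ((((u*u)*y)*v + (((u*v)*y)*u + ((u*v)*y)*u))
          - ((u*u)*(y*v) + ((u*v)*(y*u) + (u*v)*(y*u))))
        - ((((w*w)*y)*v + (((w*v)*y)*w + ((w*v)*y)*w))
          - ((w*w)*(y*v) + ((w*v)*(y*w) + (w*v)*(y*w)))) := by
    simp only [add_mul, mul_add, mul_comm w u]
    abel
  have : (((u*w)*y)*v + ((u*v)*y)*w + ((w*v)*y)*u)
      + (((u*w)*y)*v + ((u*v)*y)*w + ((w*v)*y)*u)
      - (((u*w)*(y*v) + (u*v)*(y*w) + (w*v)*(y*u))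
      + ((u*w)*(y*v) + (u*v)*(y*w) + (w*v)*(y*u))) = 0 := by
    rw [key, l1, l2, l3, sub_self, sub_self, sub_zero, sub_self, sub_zero]
  exact sub_eq_zero.mp this

end Part1

section Part2
variable {J : Type*} [NonUnitalNonAssocCommRing J]
variable (hJordan : ∀ x y : J, ((x * x) * y) * x = (x * x) * (y * x))
variable (h2 : ∀ x : J, x + x = 0 → x = 0)
variable (e : J) (hid : e * e = e)
include hJordan h2 hid

/-- Peirce cubic: 2f³w + fw = 3f²w. -/
lemma fcube (w : J) :
    (e*(e*(e*w)) + e*(e*(e*w))) + e*w = e*(e*w) + (e*(e*w) + e*(e*w)) := by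
  have l := L21 hJordan h2 e w e
  simp only [hid] at l
  apply eq_of_sub_eq h2 l
  simp only [hid, mul_comm _ e]
  abel

/-- t ∈ J₀ commutes with f: t*(e*w) = e*(t*w). -/
lemma comm_f {t : J} (ht : e * t = 0) (w : J) : t * (e * w) = e * (t * w) := by
  have l := L21 hJordan h2 e t w
  rw [hid, ht] at l
  simp only [zero_mul, mul_zero, add_zero] at l
  calc t * (e * w) = (e*w) * t := mul_comm _ _
    _ = e * (w * t) := l
    _ = e * (t * w) := by rw [mul_comm w t]

/-- J₀ * J₁ = 0. -/
lemma j0_mul_j1 {t x : J} (ht : e * t = 0) (hx : e * x = x) : t * x = 0 := by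
  have l := L21 hJordan h2 e x t
  rw [hid, hx, ht] at l
  simp only [zero_mul, mul_zero, add_zero, zero_add] at l
  -- l : x*t*e + x*t*e = e*(t*x) + (x*(t*e) + x*(t*e))
  rw [mul_comm t e, ht, mul_zero, add_zero, add_zero] at l
  -- l : x*t*e + x*t*e = e*(t*x)
  have hf : e * (t*x) = 0 := by
    have h' : e*(t*x) + e*(t*x) = e*(t*x) := by
      calc e*(t*x) + e*(t*x) = (x*t)*e + (x*t)*e := by rw [mul_comm (x*t) e, mul_comm x t]
        _ = e*(t*x) := l
    exact left_eq_add.mp h'.symm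
  calc t * x = t * (e * x) := by rw [hx]
    _ = e * (t * x) := comm_f hJordan h2 e hid ht x
    _ = 0 := hf

/-- f-shift across J₁: e*(h*x) = (e*h)*x for x ∈ J₁. -/
lemma fshift1 {x : J} (hx : e * x = x) (h : J) : e * (h * x) = (e*h) * x := by
  have l := L21 hJordan h2 e x h
  rw [hid, hx] at l
  -- l : (e*h)*x + ((x*h)*e + (x*h)*e) = e*(h*x) + (x*(h*e) + x*(h*e))
  -- (x*h)*e = e*(h*x) (comm twice), x*(h*e) = x*(e*h) = (e*h)*x
  rw [mul_comm (x*h) e, mul_comm x h, mul_comm h e, mul_comm x (e*h)] at l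
  -- l : (e*h)*x + (e*(h*x) + e*(h*x)) = e*(h*x) + ((e*h)*x + (e*h)*x)
  apply eq_of_sub_eq h2 l
  abel

/-- f-shift across J₀: e*(h*t) = (e*h)*t for t ∈ J₀. -/
lemma fshift0 {t : J} (ht : e * t = 0) (h : J) : e * (h * t) = (e*h) * t := by
  have l := L21 hJordan h2 e t h
  rw [hid, ht] at l
  simp only [zero_mul, mul_zero, add_zero] at l
  -- l : (e*h)*t = e*(h*t)
  exact l.symm

/-- H * H ⊆ J₁ ⊕ J₀ : f²(h*k) = f(h*k). -/
lemma hh_sub_z {h k : J} (hh : e*h + e*h = h) (hk : e*k + e*k = k) :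
    e*(e*(h*k)) = e*(h*k) := by
  have base := OPID hJordan h2 h e k e
  -- ((h*e)*e)*k + ((h*k)*e)*e + ((e*k)*e)*h = (h*e)*(e*k) + (h*k)*(e*e) + (e*k)*(e*h)
  rw [hid] at base
  rw [mul_comm h e, mul_comm (e*h) e, mul_comm (h*k) e, mul_comm (e*(h*k)) e,
      mul_comm (e*k) e] at base
  -- base : (e*(e*h))*k + e*(e*(h*k)) + (e*(e*k))*h = (e*h)*(e*k) + e*(h*k) + (e*k)*(e*h)
  apply tf2 h2; apply tf2 h2
  have q1 : e*h = (e*(e*h)) + (e*(e*h)) := by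
    conv_lhs => rw [← hh, mul_add]
  have q2 : e*k = (e*(e*k)) + (e*(e*k)) := by
    conv_lhs => rw [← hk, mul_add]
  have t1 : h * k = (e*h)*k + (e*h)*k := by
    conv_lhs => rw [← hh, add_mul]
  have t1' : k * h = (e*k)*h + (e*k)*h := by
    conv_lhs => rw [← hk, add_mul]
  have t2 : (e*h)*k = (e*(e*h))*k + (e*(e*h))*k := by
    conv_lhs => rw [q1, add_mul]
  have t2' : (e*k)*h = (e*(e*k))*h + (e*(e*k))*h := by
    conv_lhs => rw [q2, add_mul]
  have t3 : (e*h)*k = (e*h)*(e*k) + (e*h)*(e*k) := by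
    conv_lhs => rw [← hk, mul_add]
  have t3' : (e*k)*h = (e*k)*(e*h) + (e*k)*(e*h) := by
    conv_lhs => rw [← hh, mul_add]
  have r1 : (((e*(e*h))*k + (e*(e*h))*k) + ((e*(e*h))*k + (e*(e*h))*k)) = h*k := by
    rw [t1, t2]
  have r2 : (((e*(e*k))*h + (e*(e*k))*h) + ((e*(e*k))*h + (e*(e*k))*h)) = k*h := by
    rw [t1', t2']
  have r3 : (((e*h)*(e*k) + (e*h)*(e*k)) + ((e*h)*(e*k) + (e*h)*(e*k))) = h*k := by
    rw [t1, t3]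
  have r4 : (((e*k)*(e*h) + (e*k)*(e*h)) + ((e*k)*(e*h) + (e*k)*(e*h))) = k*h := by
    rw [t1', t3']
  have d1 : e*(e*(h*k)) - e*(h*k)
      = ((e*h)*(e*k) + (e*k)*(e*h)) - ((e*(e*h))*k + (e*(e*k))*h) :=
    eq_of_sub_eq h2 base (by abel)
  have w4 : ((((e*h)*(e*k) + (e*k)*(e*h)) - ((e*(e*h))*k + (e*(e*k))*h))
      + (((e*h)*(e*k) + (e*k)*(e*h)) - ((e*(e*h))*k + (e*(e*k))*h)))
      + ((((e*h)*(e*k) + (e*k)*(e*h)) - ((e*(e*h))*k + (e*(e*k))*h))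
      + (((e*h)*(e*k) + (e*k)*(e*h)) - ((e*(e*h))*k + (e*(e*k))*h))) = 0 := by
    have expand : ((((e*h)*(e*k) + (e*k)*(e*h)) - ((e*(e*h))*k + (e*(e*k))*h))
      + (((e*h)*(e*k) + (e*k)*(e*h)) - ((e*(e*h))*k + (e*(e*k))*h)))
      + ((((e*h)*(e*k) + (e*k)*(e*h)) - ((e*(e*h))*k + (e*(e*k))*h))
      + (((e*h)*(e*k) + (e*k)*(e*h)) - ((e*(e*h))*k + (e*(e*k))*h)))
      = ((((e*h)*(e*k) + (e*h)*(e*k)) + ((e*h)*(e*k) + (e*h)*(e*k)))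
        + (((e*k)*(e*h) + (e*k)*(e*h)) + ((e*k)*(e*h) + (e*k)*(e*h))))
        - ((((e*(e*h))*k + (e*(e*h))*k) + ((e*(e*h))*k + (e*(e*h))*k))
        + (((e*(e*k))*h + (e*(e*k))*h) + ((e*(e*k))*h + (e*(e*k))*h))) := by abel
    rw [expand, r1, r2, r3, r4]
    abel
  have s4 : (e*(e*(h*k)) + e*(e*(h*k))) + (e*(e*(h*k)) + e*(e*(h*k)))
      - ((e*(h*k) + e*(h*k)) + (e*(h*k) + e*(h*k)))
      = ((e*(e*(h*k)) - e*(h*k)) + (e*(e*(h*k)) - e*(h*k)))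
        + ((e*(e*(h*k)) - e*(h*k)) + (e*(e*(h*k)) - e*(h*k))) := by abel
  rw [d1] at s4
  rw [w4] at s4
  exact sub_eq_zero.mp s4

end Part2

/-- J₁-projection -/
def p1p {J : Type*} [NonUnitalNonAssocCommRing J] (e w : J) : J :=
  (e*(e*w) + e*(e*w)) - e*w
/-- half-projection -/
def php {J : Type*} [NonUnitalNonAssocCommRing J] (e w : J) : J :=
  ((e*w - e*(e*w)) + (e*w - e*(e*w))) + ((e*w - e*(e*w)) + (e*w - e*(e*w)))
/-- J₀-projection -/
def p0p {J : Type*} [NonUnitalNonAssocCommRing J] (e w : J) : J :=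
  (w + (e*(e*w) + e*(e*w))) - (e*w + (e*w + e*w))

section Part3
variable {J : Type*} [NonUnitalNonAssocCommRing J]
variable (hJordan : ∀ x y : J, ((x * x) * y) * x = (x * x) * (y * x))
variable (h2 : ∀ x : J, x + x = 0 → x = 0)
variable (e : J) (hid : e * e = e)
include hJordan h2 hid

omit hJordan hid in
lemma eq_of_sub_eq4 {a b c d : J} (h : c = d)
    (k : a - b = ((c-d)+(c-d))+((c-d)+(c-d))) : a = b := by
  rw [h] at k
  exact sub_eq_zero.mp (by rw [k]; abel)

omit hJordan h2 hid in
lemma parts_sum (w : J) : p1p e w + php e w + p0p e w = w := by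
  simp only [p1p, php, p0p]; abel

lemma p1p_mem (w : J) : e * p1p e w = p1p e w := by
  apply eq_of_sub_eq h2 (fcube hJordan h2 e hid w)
  simp only [p1p, mul_add, mul_sub]
  abel

lemma php_mem (w : J) : e * php e w + e * php e w = php e w := by
  apply eq_of_sub_eq4 h2 (fcube hJordan h2 e hid w).symm
  simp only [php, mul_add, mul_sub]
  abel

lemma p0p_mem (w : J) : e * p0p e w = 0 := by
  apply eq_of_sub_eq h2 (fcube hJordan h2 e hid w)
  simp only [p0p, mul_add, mul_sub]
  abel

omit hJordan h2 hid in
lemma half_f2 {x : J} (hx : e*x + e*x = x) : e*(e*x) + e*(e*x) = e*x := by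
  have := congrArg (fun z => e * z) hx
  simpa only [mul_add] using this

omit hJordan h2 hid in
lemma p1p_of_half {x : J} (hx : e*x + e*x = x) : p1p e x = 0 := by
  rw [p1p, half_f2 e hx, sub_self]

omit hJordan h2 hid in
lemma php_of_half {x : J} (hx : e*x + e*x = x) : php e x = x := by
  have u : e*x - e*(e*x) = e*(e*x) := by
    rw [sub_eq_iff_eq_add]; exact (half_f2 e hx).symm
  rw [php, u, half_f2 e hx, hx]

omit hJordan h2 hid in
lemma p0p_of_half {x : J} (hx : e*x + e*x = x) : p0p e x = 0 := by
  rw [p0p, half_f2 e hx, sub_eq_zero]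
  calc x + e*x = (e*x + e*x) + e*x := congrArg (· + e*x) hx.symm
    _ = e*x + (e*x + e*x) := by abel

omit hJordan h2 hid in
lemma p1p_of_j1 {x : J} (hx : e*x = x) : p1p e x = x := by
  rw [p1p, hx, hx]; abel

omit hJordan h2 hid in
lemma php_of_j1 {x : J} (hx : e*x = x) : php e x = 0 := by
  rw [php, hx, hx, sub_self]; abel

omit hJordan h2 hid in
lemma p0p_of_j1 {x : J} (hx : e*x = x) : p0p e x = 0 := by
  rw [p0p, hx, hx]; abel

omit hJordan h2 hid in
lemma p1p_of_j0 {x : J} (hx : e*x = 0) : p1p e x = 0 := by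
  rw [p1p, hx, mul_zero]; abel

omit hJordan h2 hid in
lemma php_of_j0 {x : J} (hx : e*x = 0) : php e x = 0 := by
  rw [php, hx, mul_zero, sub_self]; abel

omit hJordan h2 hid in
lemma p0p_of_j0 {x : J} (hx : e*x = 0) : p0p e x = x := by
  rw [p0p, hx, mul_zero]; abel

omit hJordan h2 hid in
lemma half_and_j1 {x : J} (hx : e*x + e*x = x) (h1 : e*x = x) : x = 0 := by
  rw [h1] at hx
  have : x + x = x + 0 := by rw [add_zero, hx]
  exact add_left_cancel this

omit hJordan h2 hid in
lemma half_and_j0 {x : J} (hx : e*x + e*x = x) (h0 : e*x = 0) : x = 0 := by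
  rw [h0, add_zero] at hx; exact hx.symm

/-- t ∈ J₀ commutes with the projections. -/
lemma t_php {t : J} (ht : e*t = 0) (d : J) : t * php e d = php e (t*d) := by
  have c1 := comm_f hJordan h2 e hid ht d
  have c2 : t*(e*(e*d)) = e*(e*(t*d)) := by
    rw [comm_f hJordan h2 e hid ht (e*d), c1]
  simp only [php, mul_add, mul_sub, c1, c2]

lemma t_p0p {t : J} (ht : e*t = 0) (d : J) : t * p0p e d = p0p e (t*d) := by
  have c1 := comm_f hJordan h2 e hid ht d
  have c2 : t*(e*(e*d)) = e*(e*(t*d)) := by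
    rw [comm_f hJordan h2 e hid ht (e*d), c1]
  simp only [p0p, mul_add, mul_sub, c1, c2]

/-- products: J₀ * H ⊆ H -/
lemma mul_j0_half {t h : J} (ht : e*t = 0) (hh : e*h + e*h = h) :
    e*(t*h) + e*(t*h) = t*h := by
  have k : e*(t*h) = (e*h)*t := by
    rw [mul_comm t h, fshift0 hJordan h2 e hid ht h]
  rw [k, ← add_mul, hh, mul_comm h t]

/-- H * J₁ ⊆ H (usable form) -/
lemma mul_j1_half' {x : J} (hx : e*x = x) (h : J) (hh : e*h + e*h = h) :
    e*(h*x) + e*(h*x) = h*x := by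
  rw [fshift1 hJordan h2 e hid hx h, ← add_mul, hh]

/-- J₀ * J₀ ⊆ J₀ -/
lemma mul_j0_j0 {t s : J} (ht : e*t = 0) (hs : e*s = 0) : e*(t*s) = 0 := by
  rw [← comm_f hJordan h2 e hid ht s, hs, mul_zero]

/-- J₀ * Z ⊆ J₀ -/
lemma mul_j0_z {t z : J} (ht : e*t = 0) (hz : e*(e*z) = e*z) : e*(t*z) = 0 := by
  rw [← comm_f hJordan h2 e hid ht z]
  exact j0_mul_j1 hJordan h2 e hid ht hz

/-- H * Z ⊆ H -/
lemma mul_half_z {h z : J} (hh : e*h + e*h = h) (hz : e*(e*z) = e*z) :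
    e*(h*z) + e*(h*z) = h*z := by
  have split : h*z = h*(e*z) + h*(z - e*z) := by
    rw [← mul_add]; congr 1; abel
  have m1 : e*(h*(e*z)) + e*(h*(e*z)) = h*(e*z) :=
    mul_j1_half' hJordan h2 e hid hz h hh
  have hz0 : e*(z - e*z) = 0 := by rw [mul_sub, hz, sub_self]
  have m2 : e*(h*(z - e*z)) + e*(h*(z - e*z)) = h*(z - e*z) := by
    have := mul_j0_half hJordan h2 e hid hz0 hh
    rw [mul_comm (z - e*z) h] at this
    exact this
  rw [split, mul_add]
  calc (e*(h*(e*z)) + e*(h*(z - e*z))) + (e*(h*(e*z)) + e*(h*(z - e*z)))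
      = (e*(h*(e*z)) + e*(h*(e*z))) + (e*(h*(z - e*z)) + e*(h*(z - e*z))) := by abel
    _ = h*(e*z) + h*(z - e*z) := by rw [m1, m2]

/-- iterated f-shift over J₀: e-power shift -/
lemma fshift0_iter {t : J} (ht : e*t = 0) (h : J) (m : ℕ) :
    (fun w => e*w)^[m] (h * t) = ((fun w => e*w)^[m] h) * t := by
  induction m with
  | zero => simp
  | succ m ih =>
      rw [Function.iterate_succ_apply', Function.iterate_succ_apply', ih,
        fshift0 hJordan h2 e hid ht]

end Part3

section Lists
variable {J : Type*} [NonUnitalNonAssocCommRing J]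

lemma rnm_cons (x : J) (l : List J) (hl : l ≠ []) : rnm (x :: l) = x * rnm l := by
  cases l with
  | nil => exact absurd rfl hl
  | cons y m => rfl

lemma rnm_append_singleton (U : List J) (w : J) :
    rnm (U ++ [w]) = U.foldr (· * ·) w := by
  induction U with
  | nil => rfl
  | cons u U ih =>
      rw [List.cons_append, rnm_cons u (U ++ [w]) (by simp), ih]
      rfl

lemma rnm_append_pair (U : List J) (u w : J) :
    rnm (U ++ [u, w]) = U.foldr (· * ·) (u * w) := by
  induction U with
  | nil => rfl
  | cons v U ih =>
      rw [List.cons_append, rnm_cons v (U ++ [u, w]) (by simp), ih]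
      rfl

lemma foldr_mul_add (U : List J) (p q : J) :
    U.foldr (· * ·) (p + q) = U.foldr (· * ·) p + U.foldr (· * ·) q := by
  induction U with
  | nil => rfl
  | cons u U ih => simp only [List.foldr_cons, ih, mul_add]

lemma foldr_mul_sub (U : List J) (p q : J) :
    U.foldr (· * ·) (p - q) = U.foldr (· * ·) p - U.foldr (· * ·) q := by
  induction U with
  | nil => rfl
  | cons u U ih => simp only [List.foldr_cons, ih, mul_sub]

lemma foldr_mul_zero (U : List J) : U.foldr (· * ·) (0:J) = 0 := by
  induction U with
  | nil => rfl
  | cons u U ih => simp only [List.foldr_cons, ih, mul_zero]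

lemma rnm_replicate_zero (m : ℕ) (hm : 1 ≤ m) : rnm (List.replicate m (0:J)) = 0 := by
  cases m with
  | zero => omega
  | succ m =>
      rw [List.replicate_succ]
      cases m with
      | zero => rfl
      | succ k => rw [rnm_cons 0 _ (by simp), zero_mul]

/-- e-padded monomial -/
def Epow (e : J) (m : ℕ) (s : J) : J := (List.replicate m e).foldr (· * ·) s

lemma Epow_succ (e : J) (m : ℕ) (s : J) : Epow e (m+1) s = e * Epow e m s := by
  rw [Epow, List.replicate_succ]; rfl

lemma Epow_add (e : J) (m : ℕ) (p q : J) :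
    Epow e m (p + q) = Epow e m p + Epow e m q := foldr_mul_add _ p q

lemma Epow_zero (e : J) (m : ℕ) : Epow e m (0:J) = 0 := foldr_mul_zero _

lemma Epow_j1 (e : J) (m : ℕ) {x : J} (hx : e*x = x) : Epow e m x = x := by
  induction m with
  | zero => rfl
  | succ m ih => rw [Epow_succ, ih, hx]

lemma Epow_mul_e (e : J) (m : ℕ) (s : J) : Epow e m (e*s) = Epow e (m+1) s := by
  induction m with
  | zero => rw [Epow_succ]; rfl
  | succ m ih => rw [Epow_succ e m (e*s), ih, Epow_succ e (m+1) s]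

/-- iterated doubling -/
def d2 {J : Type*} [NonUnitalNonAssocCommRing J] : ℕ → J → J
  | 0, x => x
  | (m+1), x => d2 m (x + x)

lemma half_add {e x y : J} (hx : e*x + e*x = x) (hy : e*y + e*y = y) :
    e*(x+y) + e*(x+y) = x + y := by
  rw [mul_add]
  calc (e*x + e*y) + (e*x + e*y) = (e*x + e*x) + (e*y + e*y) := by abel
    _ = x + y := by rw [hx, hy]

lemma Epow_d2_half {e : J} (m : ℕ) {x : J} (hx : e*x + e*x = x) :
    Epow e m (d2 m x) = x := by
  induction m generalizing x with
  | zero => rfl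
  | succ m ih =>
      show Epow e (m+1) (d2 m (x+x)) = x
      rw [Epow_succ, ih (half_add hx hx), mul_add, hx]

lemma d2_half_mem {e : J} (m : ℕ) {x : J} (hx : e*x + e*x = x) :
    e * (d2 m x) + e * (d2 m x) = d2 m x := by
  induction m generalizing x with
  | zero => exact hx
  | succ m ih => exact ih (half_add hx hx)

lemma Epow_half_mem {e : J} (m : ℕ) {x : J} (hx : e*x + e*x = x) :
    e * (Epow e m x) + e * (Epow e m x) = Epow e m x := by
  induction m with
  | zero => exact hx
  | succ m ih => rw [Epow_succ]; exact half_f2 e ih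

lemma Epow_z_mem {e : J} (m : ℕ) {z : J} (hz : e*(e*z) = e*z) :
    e*(e*(Epow e m z)) = e*(Epow e m z) := by
  induction m with
  | zero => exact hz
  | succ m ih => rw [Epow_succ, ih, ih]

end Lists

section Machinery
variable {J J' : Type*} [NonUnitalNonAssocCommRing J] [NonUnitalNonAssocCommRing J']
variable (hJordan : ∀ x y : J, ((x * x) * y) * x = (x * x) * (y * x))
variable (h2 : ∀ x : J, x + x = 0 → x = 0)
variable (e : J) (hid : e * e = e)
variable (hcond2 : ∀ a ∈ peirce0 e, (∀ t ∈ peirce0 e, t * a = 0) → a = 0)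
variable (n : ℕ) (hn : 2 ≤ n) (φ : J → J')
variable (hbij : Function.Bijective φ) (hmul : IsNMulMap n φ)

omit hJordan h2 hid hcond2 hbij in
include hn hmul in
/-- φ(0) = 0 (needs a zero-preimage from surjectivity, passed in). -/
lemma phi_zero' (p : J) (hp : φ p = 0) : φ 0 = 0 := by
  have l1 := hmul (0 :: List.replicate (n-1) p) (by simp; omega)
  have lhs0 : rnm (0 :: List.replicate (n-1) p) = (0:J) := by
    rw [rnm_cons 0 _ (by simp; omega), zero_mul]
  have rhs0 : rnm ((0 :: List.replicate (n-1) p).map φ) = 0 := by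
    rw [List.map_cons, List.map_replicate,
      rnm_cons (φ 0) _ (by simp; omega)]
    rw [hp, rnm_replicate_zero (n-1) (by omega), mul_zero]
  rw [lhs0, rhs0] at l1
  exact l1

omit hJordan h2 hid hcond2 in
include hn hbij hmul in
lemma phi_zero : φ 0 = 0 := by
  obtain ⟨p, hp⟩ := hbij.2 0
  exact phi_zero' n hn φ hmul p hp

omit hJordan h2 hid hcond2 hbij in
include hn hmul in
/-- good₀ propagates to (n-1)-prefixes. -/
lemma phi_foldr {c x y : J} (hc : φ c = φ x + φ y) (U : List J) (hU : U.length = n - 1) :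
    φ (U.foldr (· * ·) c) = φ (U.foldr (· * ·) x) + φ (U.foldr (· * ·) y) := by
  have bridge : ∀ w : J, φ (U.foldr (· * ·) w) = (U.map φ).foldr (· * ·) (φ w) := by
    intro w
    have h1 := hmul (U ++ [w]) (by simp [hU]; omega)
    rw [rnm_append_singleton, List.map_append, List.map_singleton,
      rnm_append_singleton] at h1
    exact h1
  rw [bridge c, bridge x, bridge y, hc, foldr_mul_add]

omit hJordan h2 hid hcond2 hbij in
include hn hmul in
/-- slot-1 product exactness through e-padded monomials -/
lemma prod_mult {c x y : J} (hc : φ c = φ x + φ y) (s' : J) :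
    φ (c * Epow e (n-2) s') = φ (x * Epow e (n-2) s') + φ (y * Epow e (n-2) s') := by
  have bridge : ∀ w : J, φ (w * Epow e (n-2) s')
      = φ w * ((List.replicate (n-2) e).map φ).foldr (· * ·) (φ s') := by
    intro w
    have h1 := hmul (w :: (List.replicate (n-2) e ++ [s'])) (by simp; omega)
    rw [rnm_cons w _ (by simp), rnm_append_singleton, List.map_cons,
      rnm_cons (φ w) _ (by simp), List.map_append, List.map_singleton,
      rnm_append_singleton] at h1
    exact h1
  rw [bridge c, bridge x, bridge y, hc, add_mul]

omit hJordan h2 hid hbij in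
include hcond2 in
/-- iterated nondegeneracy over {e} ∪ J₀ lists -/
lemma nd_iter : ∀ (m : ℕ) (w : J),
    (∀ U : List J, U.length = m → (∀ u ∈ U, u = e ∨ e*u = 0) → U.foldr (· * ·) w = 0)
    → w = 0 := by
  intro m
  induction m with
  | zero =>
      intro w h
      simpa using h [] rfl (by simp)
  | succ m ih =>
      intro w h
      have he : e * w = 0 := by
        apply ih
        intro U hU hS
        have := h (U ++ [e]) (by simp [hU]) (by
          intro u hu
          rcases List.mem_append.mp hu with h1 | h1
          · exact hS u h1
          · simp at h1; exact Or.inl h1)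
        rwa [List.foldr_append] at this
      have ht : ∀ t ∈ peirce0 e, t * w = 0 := by
        intro t htm
        apply ih
        intro U hU hS
        have := h (U ++ [t]) (by simp [hU]) (by
          intro u hu
          rcases List.mem_append.mp hu with h1 | h1
          · exact hS u h1
          · simp at h1; subst h1; exact Or.inr htm)
        rwa [List.foldr_append] at this
      exact hcond2 w he ht

omit hJordan h2 hid in
include hcond2 hn hbij hmul in
/-- zero-sided single-step extraction -/
lemma ext_zero {c x y : J} (hc : φ c = φ x + φ y) (s : J) (hsy : s * y = 0) :
    s * c = s * x := by
  have key : ∀ U : List J, U.length = n-2 → U.foldr (· * ·) (s*c - s*x) = 0 := by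
    intro U hU
    have hphi := phi_foldr n hn φ hmul hc (U ++ [s]) (by simp [hU]; omega)
    rw [List.foldr_append, List.foldr_append, List.foldr_append] at hphi
    simp only [List.foldr_cons, List.foldr_nil] at hphi
    rw [hsy, foldr_mul_zero, phi_zero n hn φ hbij hmul, add_zero] at hphi
    have := hbij.1 hphi
    rw [foldr_mul_sub, this, sub_self]
  have := nd_iter e hcond2 (n-2) (s*c - s*x) (fun U hU _ => key U hU)
  exact sub_eq_zero.mp this

omit hJordan h2 hid in
include hcond2 hn hbij hmul in
/-- R-sided single-step extraction -/
lemma ext_R {c x y : J} (hc : φ c = φ x + φ y) (s : J)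
    (hR : ∀ U : List J, U.length = n-2 → (∀ u ∈ U, u = e ∨ e*u = 0) →
      φ (U.foldr (· * ·) (s*x) + U.foldr (· * ·) (s*y))
        = φ (U.foldr (· * ·) (s*x)) + φ (U.foldr (· * ·) (s*y))) :
    s * c = s * x + s * y := by
  have key : ∀ U : List J, U.length = n-2 → (∀ u ∈ U, u = e ∨ e*u = 0) →
      U.foldr (· * ·) (s*c - (s*x + s*y)) = 0 := by
    intro U hU hS
    have hphi := phi_foldr n hn φ hmul hc (U ++ [s]) (by simp [hU]; omega)
    rw [List.foldr_append, List.foldr_append, List.foldr_append] at hphi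
    simp only [List.foldr_cons, List.foldr_nil] at hphi
    rw [← hR U hU hS, ← foldr_mul_add] at hphi
    have := hbij.1 hphi
    rw [foldr_mul_sub, this, sub_self]
  have := nd_iter e hcond2 (n-2) _ key
  exact sub_eq_zero.mp this

omit hJordan h2 hid in
include hcond2 hn hbij hmul in
/-- (e,t) two-step zero-sided extraction -/
lemma ext_et {c x y : J} (hc : φ c = φ x + φ y) (t : J) (ht0 : e*(t*x) = 0) :
    e*(t*c) = e*(t*y) := by
  rcases Nat.lt_or_ge n 3 with h3 | h3
  · have hn2 : n = 2 := by omega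
    have g : φ (t*c) = φ (t*y) + φ (t*x) := by
      have := phi_foldr n hn φ hmul hc [t] (by simp [hn2])
      simp only [List.foldr_cons, List.foldr_nil] at this
      rw [this, add_comm]
    exact ext_zero e hcond2 n hn φ hbij hmul g e ht0
  · have key : ∀ U : List J, U.length = n-3 → U.foldr (· * ·) (e*(t*c) - e*(t*y)) = 0 := by
      intro U hU
      have hphi := phi_foldr n hn φ hmul hc (U ++ [e, t]) (by simp [hU]; omega)
      rw [List.foldr_append, List.foldr_append, List.foldr_append] at hphi
      simp only [List.foldr_cons, List.foldr_nil] at hphi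
      rw [ht0, foldr_mul_zero, phi_zero n hn φ hbij hmul, zero_add] at hphi
      have := hbij.1 hphi
      rw [foldr_mul_sub, this, sub_self]
    have := nd_iter e hcond2 (n-3) _ (fun U hU _ => key U hU)
    exact sub_eq_zero.mp this

end Machinery

section Mems
variable {J : Type*} [NonUnitalNonAssocCommRing J]
lemma memh {e x : J} (hx : x ∈ peirceHalf e) : e*x + e*x = x := hx
lemma mem0 {e x : J} (hx : x ∈ peirce0 e) : e*x = 0 := hx
lemma mem1 {e x : J} (hx : x ∈ peirce1 e) : e*x = x := hx
end Mems

section Claims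
set_option linter.unusedSectionVars false
variable {J J' : Type*} [NonUnitalNonAssocCommRing J] [NonUnitalNonAssocCommRing J']
variable (hJordan : ∀ x y : J, ((x * x) * y) * x = (x * x) * (y * x))
variable (h2 : ∀ x : J, x + x = 0 → x = 0)
variable (e : J) (hid : e * e = e)
variable (hcond1 : ∀ a ∈ peirce1 e, (∀ t ∈ peirceHalf e, t * a = 0) → a = 0)
variable (hcond1' : ∀ a ∈ peirce0 e, (∀ t ∈ peirceHalf e, t * a = 0) → a = 0)
variable (hcond2 : ∀ a ∈ peirce0 e, (∀ t ∈ peirce0 e, t * a = 0) → a = 0)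
variable (hcond3 : ∀ a ∈ peirceHalf e, (∀ t ∈ peirce0 e, t * a = 0) → a = 0)
variable (n : ℕ) (hn : 2 ≤ n) (φ : J → J')
variable (hbij : Function.Bijective φ) (hmul : IsNMulMap n φ)
include hJordan h2 hid hcond1 hcond1' hcond2 hcond3 hn hbij hmul

lemma half_mul_j0' {t h : J} (ht : e*t = 0) (hh : e*h + e*h = h) :
    e*(h*t) + e*(h*t) = h*t := by
  rw [mul_comm h t]; exact mul_j0_half hJordan h2 e hid ht hh

lemma Epow_shift0 {t : J} (ht : e*t = 0) (h : J) (m : ℕ) :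
    Epow e m (h*t) = (Epow e m h) * t := by
  induction m with
  | zero => rfl
  | succ m ih => rw [Epow_succ, ih, fshift0 hJordan h2 e hid ht, Epow_succ]

lemma p0p_f_zero (w : J) : p0p e (e*w) = 0 := by
  apply eq_of_sub_eq h2 (fcube hJordan h2 e hid w)
  simp only [p0p, mul_add, mul_sub]
  abel

lemma php_zero : php e (0:J) = 0 := by simp [php]
lemma p0p_zero : p0p e (0:J) = 0 := by simp [p0p]
lemma p0p_sub (x y : J) : p0p e (x - y) = p0p e x - p0p e y := by
  simp only [p0p, mul_sub]; abel

/-- S₀-foldr preserves H -/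
lemma S0_foldr_half (U : List J) (hS : ∀ u ∈ U, u = e ∨ e*u = 0) {p : J}
    (hp : e*p + e*p = p) :
    e*(U.foldr (· * ·) p) + e*(U.foldr (· * ·) p) = U.foldr (· * ·) p := by
  induction U with
  | nil => exact hp
  | cons u U ih =>
      have ihQ := ih (fun v hv => hS v (List.mem_cons_of_mem u hv))
      simp only [List.foldr_cons]
      rcases hS u List.mem_cons_self with h1 | h1
      · rw [h1]; exact half_f2 e ihQ
      · exact mul_j0_half hJordan h2 e hid h1 ihQ

lemma S0_foldr_j1 (U : List J) (hS : ∀ u ∈ U, u = e ∨ e*u = 0) {p : J}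
    (hp : e*p = p) :
    e*(U.foldr (· * ·) p) = U.foldr (· * ·) p := by
  induction U with
  | nil => exact hp
  | cons u U ih =>
      have ihQ := ih (fun v hv => hS v (List.mem_cons_of_mem u hv))
      simp only [List.foldr_cons]
      rcases hS u List.mem_cons_self with h1 | h1
      · rw [h1, ihQ]; exact ihQ
      · rw [j0_mul_j1 hJordan h2 e hid h1 ihQ, mul_zero]

lemma S0_foldr_j0 (U : List J) (hS : ∀ u ∈ U, u = e ∨ e*u = 0) {p : J}
    (hp : e*p = 0) :
    e*(U.foldr (· * ·) p) = 0 := by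
  induction U with
  | nil => exact hp
  | cons u U ih =>
      have ihQ := ih (fun v hv => hS v (List.mem_cons_of_mem u hv))
      simp only [List.foldr_cons]
      rcases hS u List.mem_cons_self with h1 | h1
      · rw [h1, ihQ, mul_zero]
      · exact mul_j0_j0 hJordan h2 e hid h1 ihQ

/-- CLAIM T2 : φ additive on (H, J₁) pairs. -/
lemma claimT2 {k x : J} (hk : e*k + e*k = k) (hx : e*x = x) :
    φ (k + x) = φ k + φ x := by
  obtain ⟨c, hc⟩ := hbij.2 (φ k + φ x)
  have step1 : ∀ t, e*t = 0 → t * c = t * k := fun t ht =>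
    ext_zero e hcond2 n hn φ hbij hmul hc t (j0_mul_j1 hJordan h2 e hid ht hx)
  have htd : ∀ t, e*t = 0 → t * (c - k - x) = 0 := by
    intro t ht
    rw [mul_sub, mul_sub, step1 t ht, j0_mul_j1 hJordan h2 e hid ht hx]
    abel
  set d := c - k - x with hd
  have hph : php e d = 0 := hcond3 _ (php_mem hJordan h2 e hid d) (fun t htm => by
    rw [t_php hJordan h2 e hid (mem0 htm) d, htd t (mem0 htm), php_zero hJordan h2 e hid hcond1 hcond1' hcond2 hcond3 n hn φ hbij hmul])
  have hp0 : p0p e d = 0 := hcond2 _ (p0p_mem hJordan h2 e hid d) (fun t htm => by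
    rw [t_p0p hJordan h2 e hid (mem0 htm) d, htd t (mem0 htm), p0p_zero hJordan h2 e hid hcond1 hcond1' hcond2 hcond3 n hn φ hbij hmul])
  have hd1 : e * d = d := by
    have hs := parts_sum e d
    rw [hph, hp0, add_zero, add_zero] at hs
    conv_lhs => rw [← hs]
    conv_rhs => rw [← hs]
    exact p1p_mem hJordan h2 e hid d
  have step2 : ∀ h, e*h + e*h = h → h * d = 0 := by
    intro h hh
    have gh : φ (c * h) = φ (k * h) + φ (x * h) := by
      have := prod_mult e n hn φ hmul hc (d2 (n-2) h)
      rwa [Epow_d2_half (n-2) hh] at this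
    have hv : e*(h*d) + e*(h*d) = h*d := mul_j1_half' hJordan h2 e hid hd1 h hh
    have htv : ∀ t, e*t = 0 → t * (h*d) = 0 := by
      intro t ht
      have hkz : e*(e*(k*h)) = e*(k*h) := hh_sub_z hJordan h2 e hid hk hh
      have htk0 : e*(t*(k*h)) = 0 := mul_j0_z hJordan h2 e hid ht hkz
      have key := ext_et e hcond2 n hn φ hbij hmul gh t htk0
      -- key : e*(t*(c*h)) = e*(t*(x*h))
      have htv_mem : e*(t*(h*d)) + e*(t*(h*d)) = t*(h*d) :=
        mul_j0_half hJordan h2 e hid ht hv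
      have hetv : e*(t*(h*d)) = 0 := by
        have e1 : h*d = c*h - k*h - x*h := by
          rw [hd, mul_comm h _, sub_mul, sub_mul]
        rw [e1, mul_sub, mul_sub, mul_sub, mul_sub, key, htk0]
        abel
      rw [← htv_mem, hetv, add_zero]
    exact hcond3 (h*d) hv (fun t htm => htv t (mem0 htm))
  have hd0 : d = 0 := hcond1 d hd1 (fun t htm => step2 t (memh htm))
  have hck : c = k + x := by
    have h' : c - (k + x) = 0 := by rw [← hd0, hd]; abel
    exact sub_eq_zero.mp h'
  rw [← hck]; exact hc

/-- CLAIM T3 : φ additive on (J₀, H) pairs. -/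
lemma claimT3 {x k : J} (h0 : e*x = 0) (hk : e*k + e*k = k) :
    φ (x + k) = φ x + φ k := by
  obtain ⟨c, hc⟩ := hbij.2 (φ x + φ k)
  have hc' : φ c = φ k + φ x := by rw [hc, add_comm]
  have he : e * c = e * k := ext_zero e hcond2 n hn φ hbij hmul hc' e h0
  set d := c - x - k with hd
  have hedz : e * d = 0 := by
    rw [hd, mul_sub, mul_sub, he, h0]
    abel
  have step2 : ∀ h, e*h + e*h = h → h * d = 0 := by
    intro h hh
    have gh : φ (c * h) = φ (x * h) + φ (k * h) := by
      have := prod_mult e n hn φ hmul hc (d2 (n-2) h)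
      rwa [Epow_d2_half (n-2) hh] at this
    -- memberships
    have hxh : e*(x*h) + e*(x*h) = x*h := mul_j0_half hJordan h2 e hid h0 hh
    have hkh : e*(e*(k*h)) = e*(k*h) := hh_sub_z hJordan h2 e hid hk hh
    -- e-step with R-side from T2
    have estep : e * (c*h) = e*(x*h) + e*(k*h) := by
      apply ext_R e hcond2 n hn φ hbij hmul gh e
      intro U hU hS
      have hP : e*(U.foldr (· * ·) (e*(x*h))) + e*(U.foldr (· * ·) (e*(x*h)))
          = U.foldr (· * ·) (e*(x*h)) :=
        S0_foldr_half hJordan h2 e hid hcond1 hcond1' hcond2 hcond3 n hn φ hbij hmul U hS (half_f2 e hxh)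
      have hQ : e*(U.foldr (· * ·) (e*(k*h))) = U.foldr (· * ·) (e*(k*h)) :=
        S0_foldr_j1 hJordan h2 e hid hcond1 hcond1' hcond2 hcond3 n hn φ hbij hmul U hS hkh
      exact claimT2 hJordan h2 e hid hcond1 hcond1' hcond2 hcond3 n hn φ hbij hmul hP hQ
    have hw : e * (h * d) = 0 := by
      have e1 : h*d = c*h - x*h - k*h := by
        rw [hd, mul_comm h _, sub_mul, sub_mul]
      rw [e1, mul_sub, mul_sub, estep]
      abel
    have hv : e*(h*d) + e*(h*d) = h*d := by
      rw [mul_comm h d]; exact mul_j0_half hJordan h2 e hid hedz hh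
    exact half_and_j0 e hv hw
  have hd0 : d = 0 := hcond1' d hedz (fun t htm => step2 t (memh htm))
  have hck : c = x + k := by
    have h' : c - (x + k) = 0 := by rw [← hd0, hd]; abel
    exact sub_eq_zero.mp h'
  rw [← hck]; exact hc

/-- CLAIM T4 : φ additive on (H, Z) pairs. -/
lemma claimT4 {k z : J} (hk : e*k + e*k = k) (hz : e*(e*z) = e*z) :
    φ (k + z) = φ k + φ z := by
  obtain ⟨c, hc⟩ := hbij.2 (φ k + φ z)
  have step1 : ∀ t, e*t = 0 → t * c = t*k + t*z := by
    intro t ht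
    apply ext_R e hcond2 n hn φ hbij hmul hc t
    intro U hU hS
    have hP : e*(U.foldr (· * ·) (t*k)) + e*(U.foldr (· * ·) (t*k))
        = U.foldr (· * ·) (t*k) :=
      S0_foldr_half hJordan h2 e hid hcond1 hcond1' hcond2 hcond3 n hn φ hbij hmul U hS (mul_j0_half hJordan h2 e hid ht hk)
    have hQ : e*(U.foldr (· * ·) (t*z)) = 0 :=
      S0_foldr_j0 hJordan h2 e hid hcond1 hcond1' hcond2 hcond3 n hn φ hbij hmul U hS (mul_j0_z hJordan h2 e hid ht hz)
    have := claimT3 hJordan h2 e hid hcond1 hcond1' hcond2 hcond3 n hn φ hbij hmul hQ hP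
    rw [add_comm] at this
    rw [this, add_comm]
  have htd : ∀ t, e*t = 0 → t * (c - k - z) = 0 := by
    intro t ht
    rw [mul_sub, mul_sub, step1 t ht]
    abel
  set d := c - k - z with hd
  have hph : php e d = 0 := hcond3 _ (php_mem hJordan h2 e hid d) (fun t htm => by
    rw [t_php hJordan h2 e hid (mem0 htm) d, htd t (mem0 htm), php_zero hJordan h2 e hid hcond1 hcond1' hcond2 hcond3 n hn φ hbij hmul])
  have hp0 : p0p e d = 0 := hcond2 _ (p0p_mem hJordan h2 e hid d) (fun t htm => by
    rw [t_p0p hJordan h2 e hid (mem0 htm) d, htd t (mem0 htm), p0p_zero hJordan h2 e hid hcond1 hcond1' hcond2 hcond3 n hn φ hbij hmul])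
  have hd1 : e * d = d := by
    have hs := parts_sum e d
    rw [hph, hp0, add_zero, add_zero] at hs
    conv_lhs => rw [← hs]
    conv_rhs => rw [← hs]
    exact p1p_mem hJordan h2 e hid d
  have step2 : ∀ h, e*h + e*h = h → h * d = 0 := by
    intro h hh
    have gh : φ (c * h) = φ (k * h) + φ (z * h) := by
      have := prod_mult e n hn φ hmul hc (d2 (n-2) h)
      rwa [Epow_d2_half (n-2) hh] at this
    have hkh : e*(e*(k*h)) = e*(k*h) := hh_sub_z hJordan h2 e hid hk hh
    have hzh : e*(z*h) + e*(z*h) = z*h := by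
      rw [mul_comm z h]; exact mul_half_z hJordan h2 e hid hh hz
    have estep : e * (c*h) = e*(k*h) + e*(z*h) := by
      apply ext_R e hcond2 n hn φ hbij hmul gh e
      intro U hU hS
      have hP : e*(U.foldr (· * ·) (e*(k*h))) = U.foldr (· * ·) (e*(k*h)) :=
        S0_foldr_j1 hJordan h2 e hid hcond1 hcond1' hcond2 hcond3 n hn φ hbij hmul U hS hkh
      have hQ : e*(U.foldr (· * ·) (e*(z*h))) + e*(U.foldr (· * ·) (e*(z*h)))
          = U.foldr (· * ·) (e*(z*h)) :=
        S0_foldr_half hJordan h2 e hid hcond1 hcond1' hcond2 hcond3 n hn φ hbij hmul U hS (half_f2 e hzh)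
      have := claimT2 hJordan h2 e hid hcond1 hcond1' hcond2 hcond3 n hn φ hbij hmul hQ hP
      rw [add_comm] at this
      rw [this, add_comm]
    have hw : e * (h * d) = 0 := by
      have e1 : h*d = c*h - k*h - z*h := by
        rw [hd, mul_comm h _, sub_mul, sub_mul]
      rw [e1, mul_sub, mul_sub, estep]
      abel
    have hv : e*(h*d) + e*(h*d) = h*d := mul_j1_half' hJordan h2 e hid hd1 h hh
    exact half_and_j0 e hv hw
  have hd0 : d = 0 := hcond1 d hd1 (fun t htm => step2 t (memh htm))
  have hck : c = k + z := by
    have h' : c - (k + z) = 0 := by rw [← hd0, hd]; abel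
    exact sub_eq_zero.mp h'
  rw [← hck]; exact hc

/-- Tform closure under S₀-prefixes -/
lemma Tf_foldr (U : List J) (hS : ∀ u ∈ U, u = e ∨ e*u = 0) (q : J)
    (hq : q = 0 ∨ ∃ h' t', (e*h' + e*h' = h') ∧ (e*t' = 0) ∧ q = h'*t') :
    U.foldr (· * ·) q = 0 ∨
      ∃ h' t', (e*h' + e*h' = h') ∧ (e*t' = 0) ∧ U.foldr (· * ·) q = h'*t' := by
  induction U with
  | nil => exact hq
  | cons u U ih =>
      have ihQ := ih (fun v hv => hS v (List.mem_cons_of_mem u hv))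
      simp only [List.foldr_cons]
      rcases ihQ with h0 | ⟨h', t', hh', ht', heq⟩
      · left; rw [h0, mul_zero]
      · rcases hS u List.mem_cons_self with h1 | h1
        · right
          exact ⟨e*h', t', half_f2 e hh', ht', by
            rw [h1, heq, fshift0 hJordan h2 e hid ht' h']⟩
        · right
          refine ⟨h'*t', u, half_mul_j0' hJordan h2 e hid hcond1 hcond1' hcond2 hcond3 n hn φ hbij hmul ht' hh', h1, ?_⟩
          rw [heq, mul_comm u (h'*t')]

/-- CLAIM T5 (seed): φ additive on pairs (H, H∘J₀). -/
lemma claimT5 {k a t0 : J} (hk : e*k + e*k = k) (ha : e*a + e*a = a)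
    (ht0 : e*t0 = 0) : φ (k + a*t0) = φ k + φ (a*t0) := by
  set A := d2 (n-2) a with hA'
  set B := d2 (n-1) k with hB'
  have hA : e*A + e*A = A := d2_half_mem (n-2) ha
  have hB : e*B + e*B = B := d2_half_mem (n-1) hk
  have hu : φ (e + A) = φ e + φ A := by
    rw [add_comm e A, add_comm (φ e) (φ A)]
    exact claimT2 hJordan h2 e hid hcond1 hcond1' hcond2 hcond3 n hn φ hbij hmul hA hid
  have hw : φ (t0 + B) = φ t0 + φ B := claimT3 hJordan h2 e hid hcond1 hcond1' hcond2 hcond3 n hn φ hbij hmul ht0 hB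
  have br : ∀ x y : J, (List.replicate (n-2) (φ e)).foldr (· * ·) (φ x * φ y)
      = φ (Epow e (n-2) (x*y)) := by
    intro x y
    have h2' := hmul (List.replicate (n-2) e ++ [x, y]) (by simp; omega)
    rw [rnm_append_pair, List.map_append, List.map_replicate] at h2'
    simp only [List.map_cons, List.map_nil] at h2'
    rw [rnm_append_pair] at h2'
    exact h2'.symm
  have main : φ (Epow e (n-2) ((e+A) * (t0+B)))
      = ((φ (Epow e (n-2) (e*t0)) + φ (Epow e (n-2) (e*B)))
        + (φ (Epow e (n-2) (A*t0)) + φ (Epow e (n-2) (A*B)))) := by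
    have h1 := hmul (List.replicate (n-2) e ++ [e+A, t0+B]) (by simp; omega)
    rw [rnm_append_pair, List.map_append, List.map_replicate] at h1
    simp only [List.map_cons, List.map_nil] at h1
    rw [rnm_append_pair] at h1
    have rhs2 : (List.replicate (n-2) (φ e)).foldr (· * ·) (φ (e+A) * φ (t0+B))
        = ((φ (Epow e (n-2) (e*t0)) + φ (Epow e (n-2) (e*B)))
          + (φ (Epow e (n-2) (A*t0)) + φ (Epow e (n-2) (A*B)))) := by
      rw [hu, hw, add_mul, mul_add, mul_add, foldr_mul_add, foldr_mul_add,
        foldr_mul_add, br, br, br, br]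
    exact h1.trans rhs2
  have t1 : Epow e (n-2) (e*t0) = 0 := by rw [ht0, Epow_zero]
  have hn1 : n - 2 + 1 = n - 1 := by omega
  have t2 : Epow e (n-2) (e*B) = k := by
    rw [Epow_mul_e, hn1, hB']
    exact Epow_d2_half (n-1) hk
  have t3 : Epow e (n-2) (A*t0) = a * t0 := by
    rw [Epow_shift0 hJordan h2 e hid hcond1 hcond1' hcond2 hcond3 n hn φ hbij hmul ht0 A (n-2), hA', Epow_d2_half (n-2) ha]
  have habZ : e*(e*(Epow e (n-2) (A*B))) = e*(Epow e (n-2) (A*B)) :=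
    Epow_z_mem (n-2) (hh_sub_z hJordan h2 e hid hA hB)
  have hat0H : e*(a*t0) + e*(a*t0) = a*t0 := half_mul_j0' hJordan h2 e hid hcond1 hcond1' hcond2 hcond3 n hn φ hbij hmul ht0 ha
  have hsumH : e*(k + a*t0) + e*(k + a*t0) = k + a*t0 := half_add hk hat0H
  have el : Epow e (n-2) ((e+A)*(t0+B)) = (k + a*t0) + Epow e (n-2) (A*B) := by
    have expand : (e+A)*(t0+B) = (e*t0 + e*B) + (A*t0 + A*B) := by
      rw [add_mul, mul_add, mul_add]
    rw [expand, Epow_add, Epow_add, Epow_add, t1, t2, t3]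
    abel
  have split : φ ((k + a*t0) + Epow e (n-2) (A*B))
      = φ (k + a*t0) + φ (Epow e (n-2) (A*B)) := claimT4 hJordan h2 e hid hcond1 hcond1' hcond2 hcond3 n hn φ hbij hmul hsumH habZ
  have main2 : φ (k + a*t0) + φ (Epow e (n-2) (A*B))
      = φ k + (φ (a*t0) + φ (Epow e (n-2) (A*B))) := by
    rw [← split, ← el, main, t1, t2, t3, phi_zero n hn φ hbij hmul, zero_add]
  have main3 : φ (k + a*t0) + φ (Epow e (n-2) (A*B))
      = (φ k + φ (a*t0)) + φ (Epow e (n-2) (A*B)) := by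
    rw [main2, add_assoc]
  exact add_right_cancel main3

/-- CLAIM T6 (target): φ additive on (H, H). -/
lemma claimT6 {a b : J} (ha : e*a + e*a = a) (hb : e*b + e*b = b) :
    φ (a + b) = φ a + φ b := by
  obtain ⟨c, hc⟩ := hbij.2 (φ a + φ b)
  obtain ⟨c₂, hc₂⟩ := hbij.2 (φ (d2 (n-1) a) + φ (d2 (n-1) b))
  have hEc₂ : φ (Epow e (n-1) c₂) = φ a + φ b := by
    have hfold := phi_foldr n hn φ hmul hc₂ (List.replicate (n-1) e) (by simp)
    have e2 : (List.replicate (n-1) e).foldr (· * ·) (d2 (n-1) a) = a :=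
      Epow_d2_half (n-1) ha
    have e3 : (List.replicate (n-1) e).foldr (· * ·) (d2 (n-1) b) = b :=
      Epow_d2_half (n-1) hb
    rw [e2, e3] at hfold
    exact hfold
  have hcc2 : c = Epow e (n-1) c₂ := hbij.1 (by rw [hEc₂, hc])
  have hp0c : p0p e c = 0 := by
    have hsplit : n - 1 = (n-2) + 1 := by omega
    rw [hcc2, hsplit, Epow_succ]
    exact p0p_f_zero hJordan h2 e hid hcond1 hcond1' hcond2 hcond3 n hn φ hbij hmul _
  have step1 : ∀ t, e*t = 0 → t*c = t*a + t*b := by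
    intro t ht
    apply ext_R e hcond2 n hn φ hbij hmul hc t
    intro U hU hS
    have hP : e*(U.foldr (· * ·) (t*a)) + e*(U.foldr (· * ·) (t*a))
        = U.foldr (· * ·) (t*a) :=
      S0_foldr_half hJordan h2 e hid hcond1 hcond1' hcond2 hcond3 n hn φ hbij hmul U hS (mul_j0_half hJordan h2 e hid ht ha)
    have hQ := Tf_foldr hJordan h2 e hid hcond1 hcond1' hcond2 hcond3 n hn φ hbij hmul U hS (t*b) (Or.inr ⟨b, t, hb, ht, (mul_comm t b)⟩)
    rcases hQ with h0 | ⟨h', t', hh', ht', heq⟩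
    · rw [h0, add_zero, phi_zero n hn φ hbij hmul, add_zero]
    · rw [heq]
      exact claimT5 hJordan h2 e hid hcond1 hcond1' hcond2 hcond3 n hn φ hbij hmul hP hh' ht'
  set d := c - a - b with hd
  have htd : ∀ t, e*t = 0 → t*d = 0 := by
    intro t ht
    rw [hd, mul_sub, mul_sub, step1 t ht]
    abel
  have hph : php e d = 0 := hcond3 _ (php_mem hJordan h2 e hid d) (fun t htm => by
    rw [t_php hJordan h2 e hid (mem0 htm) d, htd t (mem0 htm),
      php_zero hJordan h2 e hid hcond1 hcond1' hcond2 hcond3 n hn φ hbij hmul])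
  have hp0d : p0p e d = 0 := by
    rw [hd, p0p_sub hJordan h2 e hid hcond1 hcond1' hcond2 hcond3 n hn φ hbij hmul, p0p_sub hJordan h2 e hid hcond1 hcond1' hcond2 hcond3 n hn φ hbij hmul, hp0c,
      p0p_of_half e ha, p0p_of_half e hb]
    simp
  have hd1 : e * d = d := by
    have hs := parts_sum e d
    rw [hph, hp0d, add_zero, add_zero] at hs
    conv_lhs => rw [← hs]
    conv_rhs => rw [← hs]
    exact p1p_mem hJordan h2 e hid d
  have step4 : ∀ h, e*h + e*h = h → h*d = 0 := by
    intro h hh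
    have gh : φ (c*h) = φ (a*h) + φ (b*h) := by
      have := prod_mult e n hn φ hmul hc (d2 (n-2) h)
      rwa [Epow_d2_half (n-2) hh] at this
    have g2 : φ (e*(c*h)) = φ (e*(a*h)) + φ (e*(b*h)) := by
      have := prod_mult e n hn φ hmul gh e
      rw [Epow_j1 e (n-2) hid] at this
      rw [mul_comm (c*h) e, mul_comm (a*h) e, mul_comm (b*h) e] at this
      exact this
    have hA1 : e*(e*(a*h)) = e*(a*h) := hh_sub_z hJordan h2 e hid ha hh
    have hB1 : e*(e*(b*h)) = e*(b*h) := hh_sub_z hJordan h2 e hid hb hh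
    have htD : ∀ t, e*t = 0 → t * (e*(c*h) - e*(a*h) - e*(b*h)) = 0 := by
      intro t ht
      have k1 : t * (e*(c*h)) = t * (e*(a*h)) :=
        ext_zero e hcond2 n hn φ hbij hmul g2 t (j0_mul_j1 hJordan h2 e hid ht hB1)
      rw [mul_sub, mul_sub, k1, j0_mul_j1 hJordan h2 e hid ht hA1,
        j0_mul_j1 hJordan h2 e hid ht hB1]
      abel
    have hphD : php e (e*(c*h) - e*(a*h) - e*(b*h)) = 0 :=
      hcond3 _ (php_mem hJordan h2 e hid _) (fun t htm => by
        rw [t_php hJordan h2 e hid (mem0 htm) _, htD t (mem0 htm),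
          php_zero hJordan h2 e hid hcond1 hcond1' hcond2 hcond3 n hn φ hbij hmul])
    have hp0D : p0p e (e*(c*h) - e*(a*h) - e*(b*h)) = 0 :=
      hcond2 _ (p0p_mem hJordan h2 e hid _) (fun t htm => by
        rw [t_p0p hJordan h2 e hid (mem0 htm) _, htD t (mem0 htm),
          p0p_zero hJordan h2 e hid hcond1 hcond1' hcond2 hcond3 n hn φ hbij hmul])
    have hD1 : e * (e*(c*h) - e*(a*h) - e*(b*h)) = e*(c*h) - e*(a*h) - e*(b*h) := by
      have hs := parts_sum e (e*(c*h) - e*(a*h) - e*(b*h))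
      rw [hphD, hp0D, add_zero, add_zero] at hs
      conv_lhs => rw [← hs]
      conv_rhs => rw [← hs]
      exact p1p_mem hJordan h2 e hid _
    have hv : e*(h*d) + e*(h*d) = h*d := mul_j1_half' hJordan h2 e hid hd1 h hh
    have hDv : e*(h*d) = e*(c*h) - e*(a*h) - e*(b*h) := by
      rw [hd, mul_comm h (c - a - b), sub_mul, sub_mul, mul_sub, mul_sub]
    have hDH : e*(e*(h*d)) + e*(e*(h*d)) = e*(h*d) := half_f2 e hv
    rw [hDv] at hDH
    have hD0 : e*(c*h) - e*(a*h) - e*(b*h) = 0 := half_and_j1 e hDH hD1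
    have hw : e*(h*d) = 0 := by rw [hDv]; exact hD0
    exact half_and_j0 e hv hw
  have hd0 : d = 0 := hcond1 d hd1 (fun t htm => step4 t (memh htm))
  have hck : c = a + b := by
    have h' : c - (a + b) = 0 := by rw [← hd0, hd]; abel
    exact sub_eq_zero.mp h'
  rw [← hck]
  exact hc

end Claims


theorem nMulIso_additive_on_half {J J' : Type*} [NonUnitalNonAssocCommRing J] [NonUnitalNonAssocCommRing J']
    (hJordan : ∀ x y : J, ((x * x) * y) * x = (x * x) * (y * x))
    (hJordan' : ∀ x y : J', ((x * x) * y) * x = (x * x) * (y * x))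
    (h2 : ∀ x : J, x + x = 0 → x = 0)
    (e : J) (hid : e * e = e) (hne : e ≠ 0) (hnu : ∃ x : J, e * x ≠ x)
    (hcond1 : ∀ a ∈ peirce1 e, (∀ t ∈ peirceHalf e, t * a = 0) → a = 0)
    (hcond1' : ∀ a ∈ peirce0 e, (∀ t ∈ peirceHalf e, t * a = 0) → a = 0)
    (hcond2 : ∀ a ∈ peirce0 e, (∀ t ∈ peirce0 e, t * a = 0) → a = 0)
    (hcond3 : ∀ a ∈ peirceHalf e, (∀ t ∈ peirce0 e, t * a = 0) → a = 0)
    (n : ℕ) (hn : 2 ≤ n) (φ : J → J')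
    (hbij : Function.Bijective φ) (hmul : IsNMulMap n φ) :
    ∀ a ∈ peirceHalf e, ∀ b ∈ peirceHalf e,
      φ (a + b) = φ a + φ b := by
  intro a ha b hb
  exact claimT6 hJordan h2 e hid hcond1 hcond1' hcond2 hcond3 n hn φ hbij hmul
    (memh ha) (memh hb)
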